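/- Let P be an n×n row-stochastic matrix, α ∈ (0,1), K ⊆ {1,…,n}, U the indicator of the complement of K, P̃(i,j) = U(i)P(i,j), and s with U(s)=1. Define π_v = α·e_vᵀ(I − (1−α)P)⁻¹ for all v, π̃_s = α·e_sᵀ(I − (1−α)(P̃ + e_K e_sᵀ))⁻¹, and β_s(k) = π̃_s(k)/(α + (1−α)π̃_s(K)) for k ∈ K. If the linear-combination identity π_s(v) = (α·U(v)·π̃_s(v) + ∑_{k∈K} π̃_s(k)π_k(v)) / (α + (1−α)π̃_s(K)) holds for all v, then ‖π_s − (α e_sᵀ + ∑_{k∈K} β_s(k)π_k)‖₁ = α·(π̃_s(complement of K)/(α + (1−α)π̃_s(K)) − 1). -/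

import Mathlib

open Matrix

attribute [local instance] Matrix.linftyOpNormedRing Matrix.linftyOpNormedAlgebra

/-- Exact ℓ¹-error formula for the hub-based approximation of π_s. -/
theorem stmt8 {n : ℕ} (P : Matrix (Fin n) (Fin n) ℝ)
    (hP0 : ∀ i j, 0 ≤ P i j) (hP1 : ∀ i, ∑ j, P i j = 1)
    (α : ℝ) (hα0 : 0 < α) (hα1 : α < 1)
    (K : Finset (Fin n)) (s : Fin n) (hs : s ∉ K)
    (U : Fin n → ℝ) (hUdef : ∀ i, U i = if i ∈ K then 0 else 1)
    (Pt : Matrix (Fin n) (Fin n) ℝ) (hPt : Pt = Matrix.of fun i j => U i * P i j)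
    (eK : Fin n → ℝ) (heK : eK = fun i => if i ∈ K then 1 else 0)
    (π : Fin n → Fin n → ℝ)
    (hπ : ∀ v, π v = α • ((Pi.single v 1 : Fin n → ℝ) ᵥ* (1 - (1 - α) • P)⁻¹))
    (πt : Fin n → ℝ)
    (hπt : πt = α • ((Pi.single s 1 : Fin n → ℝ) ᵥ*
      (1 - (1 - α) • (Pt + vecMulVec eK (Pi.single s 1)))⁻¹))
    (β : Fin n → ℝ)
    (hβ : ∀ k, β k = πt k / (α + (1 - α) * ∑ k' ∈ K, πt k'))
    (hubs : ∀ v, π s v =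
      (α * U v * πt v + ∑ k ∈ K, πt k * π k v) / (α + (1 - α) * ∑ k ∈ K, πt k)) :
    ∑ w : Fin n, |π s w - (α * (Pi.single s 1 : Fin n → ℝ) w + ∑ k ∈ K, β k * π k w)| =
      α * ((∑ w ∈ Kᶜ, πt w) / (α + (1 - α) * ∑ k ∈ K, πt k) - 1) := by
  classical
  set M : Matrix (Fin n) (Fin n) ℝ := Pt + vecMulVec eK (Pi.single s 1) with hMdef
  have hMapp : ∀ i j, M i j = U i * P i j + eK i * (if j = s then 1 else 0) := by
    intro i j
    simp [hMdef, hPt, Matrix.vecMulVec_apply, Pi.single_apply]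
  have hM0 : ∀ i j, 0 ≤ M i j := by
    intro i j
    rw [hMapp]
    have hU0 : 0 ≤ U i := by rw [hUdef]; split <;> norm_num
    have heK0 : 0 ≤ eK i := by simp only [heK]; split <;> norm_num
    have := hP0 i j
    positivity
  have hMrow : ∀ i, ∑ j, M i j = 1 := by
    intro i
    simp only [hMapp]
    rw [Finset.sum_add_distrib, ← Finset.mul_sum, ← Finset.mul_sum, hP1 i]
    rw [Finset.sum_ite_eq' Finset.univ s (fun _ => (1 : ℝ))]
    simp only [Finset.mem_univ, if_true, mul_one]
    rw [hUdef, heK]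
    by_cases hiK : i ∈ K <;> simp [hiK]
  set t : Matrix (Fin n) (Fin n) ℝ := (1 - α) • M with htdef
  have ht0 : ∀ i j, 0 ≤ t i j := by
    intro i j
    have : t i j = (1 - α) * M i j := rfl
    rw [this]
    have := hM0 i j
    nlinarith
  have hMn : ‖M‖₊ ≤ 1 := by
    rw [Matrix.linfty_opNNNorm_def]
    refine Finset.sup_le fun i _ => ?_
    rw [← NNReal.coe_le_coe]
    push_cast
    have : ∑ j, ‖M i j‖ = 1 := by
      rw [← hMrow i]
      refine Finset.sum_congr rfl fun j _ => ?_
      rw [Real.norm_eq_abs]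
      exact abs_of_nonneg (hM0 i j)
    exact le_of_eq this
  have htnorm : ‖t‖ < 1 := by
    have hn : ‖t‖ = |1 - α| * ‖M‖ := norm_smul _ _
    rw [hn, abs_of_nonneg (by linarith : (0:ℝ) ≤ 1 - α)]
    have hM1 : ‖M‖ ≤ 1 := by
      have := NNReal.coe_le_coe.mpr hMn
      simpa using this
    nlinarith [norm_nonneg M]
  set A : Matrix (Fin n) (Fin n) ℝ := 1 - t with hAdef
  have hUnit : IsUnit A := isUnit_one_sub_of_norm_lt_one htnorm
  have hsumA : HasSum (fun k : ℕ => t ^ k) (Ring.inverse A) :=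
    hasSum_geom_series_inverse t htnorm
  have hAinv : A⁻¹ = Ring.inverse A := Matrix.nonsing_inv_eq_ringInverse A
  have hpow0 : ∀ (k : ℕ) i j, 0 ≤ (t ^ k) i j := by
    intro k
    induction k with
    | zero =>
        intro i j
        simp only [pow_zero, Matrix.one_apply]
        split <;> norm_num
    | succ k ih =>
        intro i j
        rw [pow_succ, Matrix.mul_apply]
        exact Finset.sum_nonneg fun l _ => mul_nonneg (ih i l) (ht0 l j)
  have hinv0 : ∀ i j, 0 ≤ A⁻¹ i j := by
    intro i j
    rw [hAinv]
    let f : Matrix (Fin n) (Fin n) ℝ →ₗ[ℝ] ℝ :=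
      { toFun := fun B => B i j
        map_add' := fun B C => rfl
        map_smul' := fun c B => rfl }
    have hf : Continuous f := f.continuous_of_finiteDimensional
    have hmap : HasSum (fun k : ℕ => f (t ^ k)) (f (Ring.inverse A)) :=
      hsumA.map f.toAddMonoidHom hf
    exact hmap.nonneg fun k => hpow0 k i j
  have hπtA : πt = α • (A⁻¹ s) := by
    rw [hπt, Matrix.single_one_vecMul]
    rfl
  have hπt0 : ∀ w, 0 ≤ πt w := by
    intro w
    rw [hπtA]
    exact mul_nonneg (le_of_lt hα0) (hinv0 s w)
  set D : ℝ := α + (1 - α) * ∑ k ∈ K, πt k with hDdef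
  have hK0 : 0 ≤ ∑ k ∈ K, πt k := Finset.sum_nonneg fun k _ => hπt0 k
  have hD0 : 0 < D := by
    have : 0 ≤ (1 - α) * ∑ k ∈ K, πt k := mul_nonneg (by linarith) hK0
    rw [hDdef]; linarith
  have hDne : D ≠ 0 := ne_of_gt hD0
  -- fixed point equation: πt ᵥ* A = α • Pi.single s 1
  have hinvmulA : A⁻¹ * A = 1 :=
    Matrix.nonsing_inv_mul A ((Matrix.isUnit_iff_isUnit_det A).mp hUnit)
  have hfix : πt ᵥ* A = α • (Pi.single s 1 : Fin n → ℝ) := by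
    rw [hπtA]
    have : (A⁻¹ s) ᵥ* A = Pi.single s 1 := by
      have h1 : (Pi.single s 1 : Fin n → ℝ) ᵥ* (A⁻¹ * A) = Pi.single s 1 := by
        rw [hinvmulA, Matrix.vecMul_one]
      rw [← Matrix.vecMul_vecMul, Matrix.single_one_vecMul] at h1
      exact h1
    rw [Matrix.smul_vecMul, this]
  have hfixs : πt s = α + (1 - α) * ∑ i, πt i * M i s := by
    have h1 := congrFun hfix s
    have h2 : (πt ᵥ* A) s = πt s - (1 - α) * ∑ i, πt i * M i s := by
      simp only [hAdef, Matrix.vecMul, dotProduct, Matrix.sub_apply,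
        Matrix.one_apply, htdef, Matrix.smul_apply, smul_eq_mul, mul_sub]
      rw [Finset.sum_sub_distrib, Finset.mul_sum]
      congr 1
      · simp [mul_ite]
      · exact Finset.sum_congr rfl fun i _ => by ring
    rw [h2] at h1
    have h3 : (α • (Pi.single s 1 : Fin n → ℝ)) s = α := by simp
    rw [h3] at h1
    linarith
  have hMs : ∀ i, i ∈ K → M i s = 1 := by
    intro i hi
    rw [hMapp, hUdef, heK]
    simp [hi]
  have hπtsD : D ≤ πt s := by
    rw [hfixs, hDdef]
    have hle : ∑ k ∈ K, πt k ≤ ∑ i, πt i * M i s := by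
      calc ∑ k ∈ K, πt k = ∑ k ∈ K, πt k * M k s := by
            refine Finset.sum_congr rfl fun k hk => ?_
            rw [hMs k hk, mul_one]
        _ ≤ ∑ i, πt i * M i s := by
            refine Finset.sum_le_sum_of_subset_of_nonneg (Finset.subset_univ K) ?_
            intro i _ _
            exact mul_nonneg (hπt0 i) (hM0 i s)
    nlinarith
  -- the pointwise difference formula
  have hdiff : ∀ w, π s w - (α * (Pi.single s 1 : Fin n → ℝ) w + ∑ k ∈ K, β k * π k w)
      = α * U w * πt w / D - α * (Pi.single s 1 : Fin n → ℝ) w := by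
    intro w
    rw [hubs w]
    have hsum : ∑ k ∈ K, β k * π k w = (∑ k ∈ K, πt k * π k w) / D := by
      rw [Finset.sum_div]
      refine Finset.sum_congr rfl fun k _ => ?_
      rw [hβ k, div_mul_eq_mul_div]
    rw [hsum, add_div]
    ring
  have hU0' : ∀ w, 0 ≤ U w := by intro w; rw [hUdef]; split <;> norm_num
  have habs : ∀ w, |π s w - (α * (Pi.single s 1 : Fin n → ℝ) w + ∑ k ∈ K, β k * π k w)|
      = α * U w * πt w / D - α * (Pi.single s 1 : Fin n → ℝ) w := by
    intro w
    rw [hdiff w]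
    by_cases hws : w = s
    · subst hws
      have hUs : U w = 1 := by rw [hUdef]; simp [hs]
      have h1 : (Pi.single w 1 : Fin n → ℝ) w = 1 := by simp
      rw [hUs, h1]
      have hge : 0 ≤ α * 1 * πt w / D - α * 1 := by
        simp only [mul_one]
        have h2 : α ≤ α * πt w / D := by
          rw [le_div_iff₀ hD0]
          nlinarith
        linarith
      exact abs_of_nonneg hge
    · have h1 : (Pi.single s 1 : Fin n → ℝ) w = 0 := by
        simp [Pi.single_apply, hws]
      rw [h1]
      have hge : 0 ≤ α * U w * πt w / D - α * 0 := by
        have : 0 ≤ α * U w * πt w / D :=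
          div_nonneg (mul_nonneg (mul_nonneg hα0.le (hU0' w)) (hπt0 w)) hD0.le
        linarith
      exact abs_of_nonneg hge
  simp only [habs]
  rw [Finset.sum_sub_distrib]
  have h1 : ∑ w : Fin n, α * (Pi.single s 1 : Fin n → ℝ) w = α := by
    simp [Pi.single_apply, Finset.mul_sum]
  have h2 : ∑ w : Fin n, α * U w * πt w / D = α * (∑ w ∈ Kᶜ, πt w) / D := by
    rw [← Finset.sum_div]
    congr 1
    rw [Finset.mul_sum]
    rw [← Finset.sum_compl_add_sum K (fun w => α * U w * πt w)]
    have hz : ∑ w ∈ K, α * U w * πt w = 0 := by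
      refine Finset.sum_eq_zero fun w hw => ?_
      rw [hUdef]; simp [hw]
    rw [hz, add_zero]
    refine Finset.sum_congr rfl fun w hw => ?_
    rw [Finset.mem_compl] at hw
    rw [hUdef]; simp [hw]
  rw [h1, h2]
  ring
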